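/- Let s ≥ 2 and set v = 2^{s−1} − 1 = Σ_{i=0}^{s−2} 2^i ∈ Z_{2^s}. Then for every u ∈ Z_{2^s} one has φ(v) + φ(u) = φ(v − u); consequently, for every subgroup C ⊆ Z_{2^s}^n containing the all-ones vector, the binary vector Φ(v·1) (1 being the all-ones vector of length n) belongs to the kernel K(Φ(C)). -/

import Mathlib

/-- The `i`-th digit of the binary expansion of `u : ZMod (2^s)`. -/
def gdigit (s : ℕ) (u : ZMod (2^s)) (i : ℕ) : ZMod 2 :=
  if (ZMod.val u).testBit i then 1 else 0

/-- Carlet's generalized Gray map `φ : ZMod (2^s) → (Z_2^{s-1} → Z_2)`: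
the coordinate indexed by `y ∈ Z_2^{s-1}` is `u_{s-1} + ∑ u_i y_i`. -/
def gray (s : ℕ) (u : ZMod (2^s)) : (Fin (s - 1) → ZMod 2) → ZMod 2 :=
  fun y => gdigit s u (s - 1) + ∑ i : Fin (s - 1), gdigit s u (i : ℕ) * y i

/-- The coordinatewise extension `Φ` of the Gray map, on vectors indexed by `ι`. -/
def PhiMap {ι : Type} (s : ℕ) (u : ι → ZMod (2^s)) :
    ι × (Fin (s - 1) → ZMod 2) → ZMod 2 :=
  fun p => gray s (u p.1) p.2

/-- The kernel `K(C) = {x : x + C = C}` of a binary code. -/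
def kernelSet {V : Type} [Add V] (C : Set V) : Set V :=
  {x | (fun c => x + c) '' C = C}

lemma lemL (k : ℕ) : ∀ l, l < 2^k → l ^^^ (2^k - 1) = 2^k - 1 - l := by
  induction k with
  | zero => intro l hl; interval_cases l; rfl
  | succ k ih =>
    intro l hl
    have hk : 0 < 2^k := Nat.pow_pos (by norm_num)
    have hp : 2^(k+1) = 2*2^k := by ring
    have hq : l / 2 < 2^k := by omega
    have h1 : (l ^^^ (2^(k+1)-1)) / 2 = l/2 ^^^ (2^k - 1) := by
      rw [Nat.xor_div_two]; congr 1; omega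
    have h2 := ih (l/2) hq
    have h3 : (l ^^^ (2^(k+1)-1)) % 2 = (l + (2^(k+1)-1)) % 2 := Nat.xor_mod_two_eq
    have e1 := Nat.div_add_mod (l ^^^ (2^(k+1)-1)) 2
    have e2 := Nat.div_add_mod l 2
    omega

lemma lemS (k l m : ℕ) (hl : l < 2^k) (hm : m < 2^k) :
    (2^k + l) ^^^ m = 2^k + (l ^^^ m) := by
  have hxor : l ^^^ m < 2^k := Nat.xor_lt_two_pow hl hm
  apply Nat.eq_of_testBit_eq
  intro i
  rcases lt_trichotomy i k with hi | rfl | hi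
  · rw [Nat.testBit_xor, Nat.testBit_two_pow_add_gt hi, Nat.testBit_two_pow_add_gt hi,
      Nat.testBit_xor]
  · rw [Nat.testBit_xor, Nat.testBit_two_pow_add_eq, Nat.testBit_two_pow_add_eq,
      Nat.testBit_lt_two_pow hl, Nat.testBit_lt_two_pow hm,
      Nat.testBit_lt_two_pow hxor]
    rfl
  · have h2 : 2^(k+1) ≤ 2^i := Nat.pow_le_pow_right (by norm_num) hi
    have ha : 2^k + l < 2^i := by
      have : 2^(k+1) = 2*2^k := by ring
      omega
    have hb : 2^k + (l ^^^ m) < 2^i := by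
      have : 2^(k+1) = 2*2^k := by ring
      omega
    have hm' : m < 2^i := by
      have : 2^(k+1) = 2*2^k := by ring
      omega
    rw [Nat.testBit_xor, Nat.testBit_lt_two_pow ha, Nat.testBit_lt_two_pow hm',
      Nat.testBit_lt_two_pow hb]
    rfl

section main
variable (s : ℕ) (hs : 2 ≤ s)

lemma cast_m (hs : 2 ≤ s) :
    ((2^(s-1) - 1 : ℕ) : ZMod (2^s)) = (2 : ZMod (2^s))^(s-1) - 1 := by
  have h1 : 1 ≤ 2^(s-1) := Nat.one_le_two_pow
  push_cast [h1]
  ring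

lemma val_sub (hs : 2 ≤ s) (u : ZMod (2^s)) :
    ((2^(s-1) - 1 : ZMod (2^s)) - u).val = u.val ^^^ (2^(s-1) - 1) := by
  haveI : NeZero (2^s) := ⟨(Nat.pow_pos (by norm_num)).ne'⟩
  set k := s - 1 with hk
  have hsk : s = k + 1 := by omega
  have hkpos : 0 < 2^k := Nat.pow_pos (by norm_num)
  have h2s : 2^s = 2*2^k := by rw [hsk]; ring
  set m := 2^k - 1 with hm
  have ha : u.val < 2^s := ZMod.val_lt u
  have hm_lt : m < 2^s := by omega
  have hxor_lt : u.val ^^^ m < 2^s := Nat.xor_lt_two_pow ha hm_lt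
  set a := u.val with haa
  -- key numeric identity
  have key : (a ^^^ m) + a = m ∨ (a ^^^ m) + a = m + 2^s := by
    by_cases hc : a < 2^k
    · left
      rw [lemL k a hc]
      omega
    · right
      have hl : a - 2^k < 2^k := by omega
      have hsplit : a = 2^k + (a - 2^k) := by omega
      rw [hsplit, lemS k (a - 2^k) m hl (by omega), lemL k (a - 2^k) hl]
      omega
  -- cast identity
  have hu : ((a : ℕ) : ZMod (2^s)) = u := by
    simp [haa, ZMod.natCast_val, ZMod.cast_id]
  have hcast : (((a ^^^ m) : ℕ) : ZMod (2^s)) = (2^(s-1) - 1 : ZMod (2^s)) - u := by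
    have hmc : ((m : ℕ) : ZMod (2^s)) = (2 : ZMod (2^s))^(s-1) - 1 := cast_m s hs
    have : (((a ^^^ m) + a : ℕ) : ZMod (2^s)) = ((m : ℕ) : ZMod (2^s)) := by
      rcases key with h | h
      · rw [h]
      · rw [h, Nat.cast_add, ZMod.natCast_self, add_zero]
    push_cast at this
    rw [hu] at this
    rw [hmc] at this
    linear_combination this
  rw [← hcast, ZMod.val_cast_of_lt hxor_lt]

lemma digit_v (hs : 2 ≤ s) (i : ℕ) :
    gdigit s (2^(s-1) - 1) i = if i < s - 1 then 1 else 0 := by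
  haveI : NeZero (2^s) := ⟨(Nat.pow_pos (by norm_num)).ne'⟩
  have hval : (2^(s-1) - 1 : ZMod (2^s)).val = 2^(s-1) - 1 := by
    rw [← cast_m s hs, ZMod.val_cast_of_lt]
    have h1 : 2^(s-1) ≤ 2^s := Nat.pow_le_pow_right (by norm_num) (by omega)
    have h2 : 1 ≤ 2^(s-1) := Nat.one_le_two_pow
    omega
  unfold gdigit
  rw [hval, Nat.testBit_two_pow_sub_one]
  by_cases h : i < s - 1 <;> simp [h]

lemma digit_sub (hs : 2 ≤ s) (u : ZMod (2^s)) (i : ℕ) :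
    gdigit s ((2^(s-1) - 1) - u) i
      = gdigit s (2^(s-1) - 1) i + gdigit s u i := by
  have hv := digit_v s hs i
  unfold gdigit at hv ⊢
  rw [val_sub s hs u, Nat.testBit_xor, Nat.testBit_two_pow_sub_one, hv]
  by_cases h : i < s - 1 <;>
    cases hb : (ZMod.val u).testBit i <;>
    simp [h, hb] <;> decide

theorem all_but_top_in_kernel (s : ℕ) (hs : 2 ≤ s) :
    (∀ u : ZMod (2^s),
      gray s (2 ^ (s - 1) - 1) + gray s u = gray s ((2 ^ (s - 1) - 1) - u)) ∧
    (∀ (n : ℕ) (C : AddSubgroup (Fin n → ZMod (2^s))),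
      (fun _ => (1 : ZMod (2^s))) ∈ C →
      PhiMap s (fun _ : Fin n => (2 ^ (s - 1) - 1 : ZMod (2^s))) ∈
        kernelSet (PhiMap s '' (C : Set (Fin n → ZMod (2^s))))) := by
  have part1 : ∀ u : ZMod (2^s),
      gray s (2 ^ (s - 1) - 1) + gray s u = gray s ((2 ^ (s - 1) - 1) - u) := by
    intro u
    funext y
    show gray s (2 ^ (s - 1) - 1) y + gray s u y = gray s ((2 ^ (s - 1) - 1) - u) y
    unfold gray
    rw [digit_sub s hs u (s-1)]
    have hsum : ∀ i : Fin (s-1), gdigit s ((2^(s-1) - 1) - u) (i : ℕ) * y i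
        = gdigit s (2^(s-1) - 1) (i : ℕ) * y i + gdigit s u (i : ℕ) * y i := by
      intro i
      rw [digit_sub s hs u (i : ℕ), add_mul]
    rw [Finset.sum_congr rfl (fun i _ => hsum i), Finset.sum_add_distrib]
    ring
  refine ⟨part1, ?_⟩
  intro n C hone
  set v : ZMod (2^s) := 2 ^ (s - 1) - 1 with hv
  have hvmem : (fun _ : Fin n => v) ∈ C := by
    have h := AddSubgroup.nsmul_mem C hone (2^(s-1) - 1)
    convert h using 1
    funext i
    show v = (2^(s-1) - 1) • (1 : ZMod (2^s))
    rw [nsmul_eq_mul, mul_one, cast_m s hs]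
  show (fun c => PhiMap s (fun _ : Fin n => v) + c) '' (PhiMap s '' (C : Set _))
      = PhiMap s '' (C : Set _)
  have hadd : ∀ w : Fin n → ZMod (2^s),
      PhiMap s (fun _ : Fin n => v) + PhiMap s w
        = PhiMap s ((fun _ : Fin n => v) - w) := by
    intro w
    funext p
    show gray s v p.2 + gray s (w p.1) p.2 = gray s (v - w p.1) p.2
    have := congrFun (part1 (w p.1)) p.2
    simpa using this
  ext z
  constructor
  · rintro ⟨-, ⟨w, hw, rfl⟩, rfl⟩
    exact ⟨(fun _ : Fin n => v) - w, C.sub_mem hvmem hw, (hadd w).symm⟩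
  · rintro ⟨w, hw, rfl⟩
    refine ⟨PhiMap s ((fun _ : Fin n => v) - w),
      ⟨(fun _ : Fin n => v) - w, C.sub_mem hvmem hw, rfl⟩, ?_⟩
    show PhiMap s (fun _ : Fin n => v) + PhiMap s ((fun _ : Fin n => v) - w) = PhiMap s w
    rw [hadd, sub_sub_cancel]

end main
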